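/- arXiv:1207.0229 — 5 statements merged into one kernel-verified Lean document; each statement's English description precedes it below -/
import Mathlib

section
/- Let K ≥ 1, let ρ₁, …, ρ_K be positive reals, let ν₁, …, ν_K be reals with 0 ≤ ν_k < 1 for all k, and let η* > 0 be a real number such that (1 − ν_k)/ρ_k ≤ η* for every k = 1, …, K. Then the throughput satisfies (1 − ∏_{k=1}^{K} ν_k) / (ρ₁ + Σ_{k=2}^{K} ρ_k·∏_{l=1}^{k−1} ν_l) ≤ η*. -/
open Finset

lemma harqI_aux (ρ ν : ℕ → ℝ) (ηstar : ℝ) (hη : 0 < ηstar) :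
    ∀ K : ℕ, 1 ≤ K →
    (∀ k ∈ Finset.Icc 1 K, 0 < ρ k) →
    (∀ k ∈ Finset.Icc 1 K, 0 ≤ ν k ∧ ν k < 1) →
    (∀ k ∈ Finset.Icc 1 K, (1 - ν k) / ρ k ≤ ηstar) →
    (1 - ∏ k ∈ Finset.Icc 1 K, ν k) ≤
      ηstar * (ρ 1 + ∑ k ∈ Finset.Icc 2 K, ρ k * ∏ l ∈ Finset.Icc 1 (k - 1), ν l) ∧
    0 < ρ 1 + ∑ k ∈ Finset.Icc 2 K, ρ k * ∏ l ∈ Finset.Icc 1 (k - 1), ν l := by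
  intro K hK1
  induction K, hK1 using Nat.le_induction with
  | base =>
    intro hρ hν hopt
    have h1 : (1 : ℕ) ∈ Finset.Icc 1 1 := by simp
    have hρ1 := hρ 1 h1
    have hopt1 := hopt 1 h1
    rw [div_le_iff₀ hρ1] at hopt1
    simp only [Finset.Icc_self, Finset.prod_singleton]
    constructor
    · have : Finset.Icc 2 1 = (∅ : Finset ℕ) := by decide
      rw [this]
      simpa [mul_comm] using hopt1
    · have : Finset.Icc 2 1 = (∅ : Finset ℕ) := by decide
      rw [this]; simpa using hρ1
  | succ K hK ih =>
    intro hρ hν hopt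
    have hsub : ∀ k ∈ Finset.Icc 1 K, k ∈ Finset.Icc 1 (K + 1) := by
      intro k hk
      simp only [Finset.mem_Icc] at hk ⊢
      omega
    obtain ⟨ihN, ihD⟩ := ih (fun k hk => hρ k (hsub k hk))
      (fun k hk => hν k (hsub k hk)) (fun k hk => hopt k (hsub k hk))
    have hKmem : K + 1 ∈ Finset.Icc 1 (K + 1) := by simp
    have hρK := hρ (K + 1) hKmem
    have hoptK := hopt (K + 1) hKmem
    rw [div_le_iff₀ hρK] at hoptK
    have hP : (0 : ℝ) ≤ ∏ l ∈ Finset.Icc 1 K, ν l :=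
      Finset.prod_nonneg fun l hl => (hν l (hsub l hl)).1
    have hP1 : ∏ l ∈ Finset.Icc 1 K, ν l ≤ 1 := by
      apply Finset.prod_le_one (fun l hl => (hν l (hsub l hl)).1)
      intro l hl; exact le_of_lt (hν l (hsub l hl)).2
    have hprod : ∏ k ∈ Finset.Icc 1 (K + 1), ν k
        = (∏ k ∈ Finset.Icc 1 K, ν k) * ν (K + 1) :=
      Finset.prod_Icc_succ_top (by omega) ν
    have hsum : ∑ k ∈ Finset.Icc 2 (K + 1), ρ k * ∏ l ∈ Finset.Icc 1 (k - 1), ν l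
        = (∑ k ∈ Finset.Icc 2 K, ρ k * ∏ l ∈ Finset.Icc 1 (k - 1), ν l)
          + ρ (K + 1) * ∏ l ∈ Finset.Icc 1 K, ν l := by
      have := Finset.sum_Icc_succ_top (a := 2) (b := K) (by omega)
        (fun k => ρ k * ∏ l ∈ Finset.Icc 1 (k - 1), ν l)
      simpa using this
    constructor
    · rw [hprod, hsum]
      have key : 1 - (∏ k ∈ Finset.Icc 1 K, ν k) * ν (K + 1)
          = (1 - ∏ k ∈ Finset.Icc 1 K, ν k)
            + (∏ k ∈ Finset.Icc 1 K, ν k) * (1 - ν (K + 1)) := by ring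
      rw [key]
      have h2 : (∏ k ∈ Finset.Icc 1 K, ν k) * (1 - ν (K + 1))
          ≤ (∏ k ∈ Finset.Icc 1 K, ν k) * (ηstar * ρ (K + 1)) :=
        mul_le_mul_of_nonneg_left hoptK hP
      nlinarith [ihN, h2]
    · rw [hsum]
      have : 0 ≤ ρ (K + 1) * ∏ l ∈ Finset.Icc 1 K, ν l :=
        mul_nonneg (le_of_lt hρK) hP
      linarith

/-- Core inequality of Proposition 1: if each single-transmission throughput
`(1 − ν_k)/ρ_k` is bounded by `η*`, then the HARQ-I throughput is bounded by `η*`. -/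
theorem harqI_throughput_le (K : ℕ) (hK : 1 ≤ K) (ρ ν : ℕ → ℝ) (ηstar : ℝ)
    (hρ : ∀ k ∈ Finset.Icc 1 K, 0 < ρ k)
    (hν : ∀ k ∈ Finset.Icc 1 K, 0 ≤ ν k ∧ ν k < 1)
    (hη : 0 < ηstar)
    (hopt : ∀ k ∈ Finset.Icc 1 K, (1 - ν k) / ρ k ≤ ηstar) :
    (1 - ∏ k ∈ Finset.Icc 1 K, ν k) /
      (ρ 1 + ∑ k ∈ Finset.Icc 2 K, ρ k * ∏ l ∈ Finset.Icc 1 (k - 1), ν l) ≤ ηstar := by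
  obtain ⟨hN, hD⟩ := harqI_aux ρ ν ηstar hη K hK hρ hν hopt
  rw [div_le_iff₀ hD]
  linarith [hN]
end

section
/- Let ν : (0,∞) → (0,1) be a function, let ρ̂ > 0, set η̂ = (1 − ν(ρ̂))/ρ̂, and assume that (1 − ν(ρ))/ρ < η̂ for every ρ > 0 with ρ ≠ ρ̂. Then for every K ≥ 1 and every tuple of positive reals ρ₁, …, ρ_K in which ρ_j ≠ ρ̂ for at least one index j, the strict inequality (1 − ∏_{k=1}^{K} ν(ρ_k)) / (ρ₁ + Σ_{k=2}^{K} ρ_k·∏_{l=1}^{k−1} ν(ρ_l)) < η̂ holds. -/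
open Finset

/-- Uniqueness part of Proposition 1: if `ρ̂` is the unique maximizer of the
single-transmission throughput `(1 − ν(ρ))/ρ`, then any variable-rate allocation
with at least one `ρ_j ≠ ρ̂` achieves a strictly smaller HARQ-I throughput than
`η̂ = (1 − ν(ρ̂))/ρ̂`. -/
theorem harqI_unique_maximizer (ν : ℝ → ℝ) (ρhat : ℝ) (ηhat : ℝ)
    (hν : ∀ ρ : ℝ, 0 < ρ → 0 < ν ρ ∧ ν ρ < 1)
    (hρhat : 0 < ρhat)
    (hηhat : ηhat = (1 - ν ρhat) / ρhat)
    (hmax : ∀ ρ : ℝ, 0 < ρ → ρ ≠ ρhat → (1 - ν ρ) / ρ < ηhat) :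
    ∀ (K : ℕ), 1 ≤ K → ∀ ρ : ℕ → ℝ,
      (∀ k ∈ Finset.Icc 1 K, 0 < ρ k) →
      (∃ j ∈ Finset.Icc 1 K, ρ j ≠ ρhat) →
      (1 - ∏ k ∈ Finset.Icc 1 K, ν (ρ k)) /
        (ρ 1 + ∑ k ∈ Finset.Icc 2 K, ρ k * ∏ l ∈ Finset.Icc 1 (k - 1), ν (ρ l))
        < ηhat := by
  intro K hK ρ hρpos hj
  obtain ⟨j, hjmem, hjne⟩ := hj
  set f : ℕ → ℝ := fun k => ∏ l ∈ Finset.Icc 1 k, ν (ρ l) with hf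
  -- single-transmission comparison
  have hle : ∀ ρ' : ℝ, 0 < ρ' → 1 - ν ρ' ≤ ηhat * ρ' := by
    intro ρ' hρ'
    by_cases h : ρ' = ρhat
    · subst h
      rw [hηhat, div_mul_cancel₀ _ (ne_of_gt hρ')]
    · have := hmax ρ' hρ' h
      have := (div_lt_iff₀ hρ').mp this
      linarith [this]
  have hlt : ∀ ρ' : ℝ, 0 < ρ' → ρ' ≠ ρhat → 1 - ν ρ' < ηhat * ρ' := by
    intro ρ' hρ' h
    have := (div_lt_iff₀ hρ').mp (hmax ρ' hρ' h)
    linarith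
  have hf0 : f 0 = 1 := by simp [hf]
  have hfpos : ∀ k, k ≤ K → 0 < f k := by
    intro k hk
    apply Finset.prod_pos
    intro l hl
    rw [Finset.mem_Icc] at hl
    exact (hν _ (hρpos l (Finset.mem_Icc.mpr ⟨hl.1, le_trans hl.2 hk⟩))).1
  have hstep : ∀ k ∈ Finset.Icc 1 K, f k = f (k - 1) * ν (ρ k) := by
    intro k hk
    rw [Finset.mem_Icc] at hk
    obtain ⟨hk1, hk2⟩ := hk
    have hkeq : k = (k - 1) + 1 := (Nat.succ_pred_eq_of_pos hk1).symm
    simp only [hf]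
    conv_lhs => rw [hkeq]
    rw [Finset.prod_Icc_succ_top (show 1 ≤ (k - 1) + 1 by omega), ← hkeq]
  -- numerator identity
  have hnum : 1 - f K = ∑ k ∈ Finset.Icc 1 K, (f (k - 1) - f k) := by
    rw [← Finset.Ico_add_one_right_eq_Icc, Finset.sum_Ico_eq_sum_range]
    simp only [Nat.add_sub_cancel, Nat.add_sub_cancel_left, Nat.add_comm 1]
    rw [Finset.sum_range_sub' f, hf0]
  -- denominator identity
  have hIcc : Finset.Icc 1 K = insert 1 (Finset.Icc 2 K) := by
    ext x
    simp only [Finset.mem_Icc, Finset.mem_insert]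
    omega
  have hden : ρ 1 + ∑ k ∈ Finset.Icc 2 K, ρ k * f (k - 1)
      = ∑ k ∈ Finset.Icc 1 K, ρ k * f (k - 1) := by
    rw [hIcc, Finset.sum_insert (by simp)]
    norm_num [hf0]
  -- denominator positive
  have hDpos : 0 < ∑ k ∈ Finset.Icc 1 K, ρ k * f (k - 1) := by
    apply Finset.sum_pos
    · intro k hk
      have hk' := Finset.mem_Icc.mp hk
      exact mul_pos (hρpos k hk) (hfpos (k - 1) (by omega))
    · exact ⟨1, Finset.mem_Icc.mpr ⟨le_refl 1, hK⟩⟩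
  -- termwise comparison
  have hterm : ∀ k ∈ Finset.Icc 1 K, f (k - 1) - f k ≤ ηhat * (ρ k * f (k - 1)) := by
    intro k hk
    have hk' := Finset.mem_Icc.mp hk
    have hfk : 0 < f (k - 1) := hfpos (k - 1) (by omega)
    rw [hstep k hk]
    have h1 := hle (ρ k) (hρpos k hk)
    calc f (k - 1) - f (k - 1) * ν (ρ k) = f (k - 1) * (1 - ν (ρ k)) := by ring
      _ ≤ f (k - 1) * (ηhat * ρ k) := by
          exact mul_le_mul_of_nonneg_left h1 (le_of_lt hfk)
      _ = ηhat * (ρ k * f (k - 1)) := by ring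
  have htermj : f (j - 1) - f j < ηhat * (ρ j * f (j - 1)) := by
    have hk' := Finset.mem_Icc.mp hjmem
    have hfk : 0 < f (j - 1) := hfpos (j - 1) (by omega)
    rw [hstep j hjmem]
    have h1 := hlt (ρ j) (hρpos j hjmem) hjne
    calc f (j - 1) - f (j - 1) * ν (ρ j) = f (j - 1) * (1 - ν (ρ j)) := by ring
      _ < f (j - 1) * (ηhat * ρ j) := by
          exact mul_lt_mul_of_pos_left h1 hfk
      _ = ηhat * (ρ j * f (j - 1)) := by ring
  have hsum : ∑ k ∈ Finset.Icc 1 K, (f (k - 1) - f k)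
      < ∑ k ∈ Finset.Icc 1 K, ηhat * (ρ k * f (k - 1)) :=
    Finset.sum_lt_sum hterm ⟨j, hjmem, htermj⟩
  rw [← Finset.mul_sum] at hsum
  rw [hden, div_lt_iff₀ hDpos]
  calc (1 : ℝ) - ∏ k ∈ Finset.Icc 1 K, ν (ρ k) = 1 - f K := rfl
    _ = ∑ k ∈ Finset.Icc 1 K, (f (k - 1) - f k) := hnum
    _ < ηhat * ∑ k ∈ Finset.Icc 1 K, ρ k * f (k - 1) := hsum
end

section
/- Let Q(x) = (1/√(2π))·∫_x^∞ exp(−t²/2) dt be the Gaussian Q-function. Let K ≥ 1, ξ > 0, and let ρ'₁, …, ρ'_K be positive reals; set X_k = Σ_{l=1}^{k} ρ'_l and Y_k = √(Σ_{l=1}^{k} (ρ'_l)²), and define f̃_k = Q(ξ·(X_k − 1)/Y_k) and f̌_k = Q(ξ·(1 − 1/X_k)). If X_k ≥ 1 for all k = 1, …, K, then (1 − f̃_K)/(ρ'₁ + Σ_{k=2}^{K} ρ'_k·f̃_{k−1}) ≥ (1 − f̌_K)/(ρ'₁ + Σ_{k=2}^{K} ρ'_k·f̌_{k−1}). -/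
open Finset

/-- The Gaussian Q-function: the tail of the standard normal distribution. -/
noncomputable def gaussQ (x : ℝ) : ℝ :=
  (Real.sqrt (2 * Real.pi))⁻¹ * ∫ t in Set.Ioi x, Real.exp (-t ^ 2 / 2)

lemma gauss_integrable : MeasureTheory.Integrable (fun t : ℝ => Real.exp (-t ^ 2 / 2)) := by
  have := integrable_exp_neg_mul_sq (b := (1/2 : ℝ)) (by norm_num)
  convert this using 2 with t
  ring_nf

lemma gaussQ_nonneg (x : ℝ) : 0 ≤ gaussQ x := by
  apply mul_nonneg
  · positivity
  · exact MeasureTheory.setIntegral_nonneg measurableSet_Ioi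
      (fun t _ => (Real.exp_pos _).le)

lemma gaussQ_anti {x y : ℝ} (h : x ≤ y) : gaussQ y ≤ gaussQ x := by
  unfold gaussQ
  apply mul_le_mul_of_nonneg_left _ (by positivity)
  apply MeasureTheory.setIntegral_mono_set gauss_integrable.integrableOn
  · filter_upwards with t using (Real.exp_pos _).le
  · exact Filter.Eventually.of_forall (Set.Ioi_subset_Ioi h)

lemma gaussQ_le_one (x : ℝ) : gaussQ x ≤ 1 := by
  unfold gaussQ
  have hπ : (0:ℝ) < Real.sqrt (2 * Real.pi) := by positivity
  rw [inv_mul_le_iff₀ hπ, mul_one]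
  have htot : ∫ t : ℝ, Real.exp (-t ^ 2 / 2) = Real.sqrt (2 * Real.pi) := by
    have := integral_gaussian (1/2 : ℝ)
    have heq : (fun t : ℝ => Real.exp (-(1/2) * t ^ 2)) = fun t : ℝ => Real.exp (-t ^ 2 / 2) := by
      funext t; ring_nf
    rw [heq] at this
    rw [this]
    rw [show Real.pi / (1/2) = 2 * Real.pi by ring]
  calc ∫ t in Set.Ioi x, Real.exp (-t ^ 2 / 2)
      ≤ ∫ t : ℝ, Real.exp (-t ^ 2 / 2) := by
        apply MeasureTheory.setIntegral_le_integral gauss_integrable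
        filter_upwards with t using (Real.exp_pos _).le
    _ = Real.sqrt (2 * Real.pi) := htot

/-- Proposition 2: the Gaussian-approximated throughput of truncated HARQ-IR is
lower-bounded by the expression obtained by replacing each `f̃_k = Q(ξ(X_k−1)/Y_k)`
with `f̌_k = Q(ξ(1 − 1/X_k))`. -/
theorem harqIR_throughput_lower_bound (K : ℕ) (hK : 1 ≤ K) (ξ : ℝ) (hξ : 0 < ξ)
    (ρ' : ℕ → ℝ) (hρ' : ∀ l ∈ Finset.Icc 1 K, 0 < ρ' l)
    (X Y ftil fchk : ℕ → ℝ)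
    (hX : ∀ k, X k = ∑ l ∈ Finset.Icc 1 k, ρ' l)
    (hY : ∀ k, Y k = Real.sqrt (∑ l ∈ Finset.Icc 1 k, (ρ' l) ^ 2))
    (hftil : ∀ k, ftil k = gaussQ (ξ * (X k - 1) / Y k))
    (hfchk : ∀ k, fchk k = gaussQ (ξ * (1 - 1 / X k)))
    (hX1 : ∀ k ∈ Finset.Icc 1 K, 1 ≤ X k) :
    (1 - fchk K) / (ρ' 1 + ∑ k ∈ Finset.Icc 2 K, ρ' k * fchk (k - 1)) ≤
      (1 - ftil K) / (ρ' 1 + ∑ k ∈ Finset.Icc 2 K, ρ' k * ftil (k - 1)) := by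
  -- key pointwise inequality
  have key : ∀ k ∈ Finset.Icc 1 K, ftil k ≤ fchk k := by
    intro k hk
    rw [Finset.mem_Icc] at hk
    have hsub : Finset.Icc 1 k ⊆ Finset.Icc 1 K := Finset.Icc_subset_Icc_right hk.2
    have hXk : 1 ≤ X k := hX1 k (Finset.mem_Icc.mpr hk)
    have hXpos : 0 < X k := lt_of_lt_of_le one_pos hXk
    have hYpos : 0 < Y k := by
      rw [hY]
      apply Real.sqrt_pos.mpr
      apply Finset.sum_pos (fun l hl => pow_pos (hρ' l (hsub hl)) 2)
      exact ⟨1, Finset.mem_Icc.mpr ⟨le_refl 1, hk.1⟩⟩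
    have hYX : Y k ≤ X k := by
      rw [hY, hX]
      rw [show (∑ l ∈ Finset.Icc 1 k, ρ' l) =
          Real.sqrt ((∑ l ∈ Finset.Icc 1 k, ρ' l) ^ 2) by
        rw [Real.sqrt_sq (Finset.sum_nonneg fun l hl => (hρ' l (hsub hl)).le)]]
      apply Real.sqrt_le_sqrt
      exact Finset.sum_sq_le_sq_sum_of_nonneg (fun l hl => (hρ' l (hsub hl)).le)
    rw [hftil, hfchk]
    apply gaussQ_anti
    have h1 : ξ * (1 - 1 / X k) = ξ * (X k - 1) / X k := by
      field_simp
    rw [h1]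
    apply div_le_div_of_nonneg_left _ hYpos hYX
    have : 0 ≤ X k - 1 := by linarith
    positivity
  have hkey : ∀ l ∈ Finset.Icc 1 K, 0 < ρ' l := hρ'
  have keyK : ftil K ≤ fchk K := key K (Finset.mem_Icc.mpr ⟨hK, le_refl K⟩)
  have keysub : ∀ k ∈ Finset.Icc 2 K, ftil (k - 1) ≤ fchk (k - 1) := by
    intro k hk
    rw [Finset.mem_Icc] at hk
    exact key (k - 1) (Finset.mem_Icc.mpr ⟨Nat.le_sub_one_of_lt hk.1, Nat.sub_le_of_le_add
      (le_trans hk.2 (Nat.le_succ K))⟩)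
  have hDt : 0 < ρ' 1 + ∑ k ∈ Finset.Icc 2 K, ρ' k * ftil (k - 1) := by
    apply add_pos_of_pos_of_nonneg (hρ' 1 (Finset.mem_Icc.mpr ⟨le_refl 1, hK⟩))
    apply Finset.sum_nonneg
    intro k hk
    rw [Finset.mem_Icc] at hk
    have : 0 < ρ' k := hρ' k (Finset.mem_Icc.mpr ⟨le_trans one_le_two hk.1, hk.2⟩)
    have h2 := hftil (k - 1)
    have := gaussQ_nonneg (ξ * (X (k-1) - 1) / Y (k-1))
    nlinarith [h2]
  have hDle : (ρ' 1 + ∑ k ∈ Finset.Icc 2 K, ρ' k * ftil (k - 1)) ≤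
      ρ' 1 + ∑ k ∈ Finset.Icc 2 K, ρ' k * fchk (k - 1) := by
    apply add_le_add_right
    apply Finset.sum_le_sum
    intro k hk
    rw [Finset.mem_Icc] at hk
    have hpos : 0 < ρ' k := hρ' k (Finset.mem_Icc.mpr ⟨le_trans one_le_two hk.1, hk.2⟩)
    exact mul_le_mul_of_nonneg_left (keysub k (Finset.mem_Icc.mpr hk)) hpos.le
  apply div_le_div₀
  · have := gaussQ_le_one (ξ * (X K - 1) / Y K)
    rw [hftil]; linarith
  · linarith
  · exact hDt
  · exact hDle
end

section
/- Let k ≥ 1, let 0 = ρ₀ ≤ ρ₁ ≤ ρ₂ ≤ … ≤ ρ_k be reals and let γ₁, …, γ_k be nonnegative reals. Then Σ_{l=1}^{k} (ρ_l − ρ_{l−1})·log₂(1 + Σ_{f=l}^{k} γ_f) ≤ Σ_{l=1}^{k} ρ_l·log₂(1 + γ_l). -/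
open Finset

private lemma abel_aux (ρ B : ℕ → ℝ) (hρ0 : ρ 0 = 0) (k : ℕ) :
    ∑ l ∈ Icc 1 k, (ρ l - ρ (l - 1)) * B l
      = ∑ l ∈ Icc 1 k, ρ l * (B l - B (l + 1)) + ρ k * B (k + 1) := by
  induction k with
  | zero => simp [hρ0]
  | succ n ih =>
    rw [Finset.sum_Icc_succ_top (Nat.le_add_left 1 n),
        Finset.sum_Icc_succ_top (Nat.le_add_left 1 n), ih]
    simp only [Nat.add_sub_cancel]
    ring

/-- Chase combining accumulates less mutual information than incremental redundancy:
`Σ_{l=1}^{k} (ρ_l − ρ_{l−1})·log₂(1 + Σ_{f=l}^{k} γ_f) ≤ Σ_{l=1}^{k} ρ_l·log₂(1 + γ_l)`. -/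
theorem chase_le_ir_mutual_information (k : ℕ) (hk : 1 ≤ k) (ρ γ : ℕ → ℝ)
    (hρ0 : ρ 0 = 0)
    (hρmono : ∀ l, 1 ≤ l → l ≤ k → ρ (l - 1) ≤ ρ l)
    (hγ : ∀ l ∈ Finset.Icc 1 k, 0 ≤ γ l) :
    ∑ l ∈ Finset.Icc 1 k, (ρ l - ρ (l - 1)) *
        Real.logb 2 (1 + ∑ f ∈ Finset.Icc l k, γ f) ≤
      ∑ l ∈ Finset.Icc 1 k, ρ l * Real.logb 2 (1 + γ l) := by
  have hρnn : ∀ l, l ≤ k → 0 ≤ ρ l := by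
    intro l
    induction l with
    | zero => intro _; simp [hρ0]
    | succ n ih =>
      intro h
      have h1 := hρmono (n + 1) (Nat.le_add_left 1 n) h
      simp only [Nat.add_sub_cancel] at h1
      exact (ih (Nat.le_of_succ_le h)).trans h1
  set B : ℕ → ℝ := fun l => Real.logb 2 (1 + ∑ f ∈ Icc l k, γ f) with hB
  have hBtop : B (k + 1) = 0 := by
    simp [hB, Finset.Icc_eq_empty_of_lt (Nat.lt_succ_self k)]
  rw [abel_aux ρ B hρ0 k, hBtop, mul_zero, add_zero]
  apply Finset.sum_le_sum
  intro l hl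
  obtain ⟨hl1, hlk⟩ := Finset.mem_Icc.mp hl
  have hg : 0 ≤ γ l := hγ l hl
  have hT : 0 ≤ ∑ f ∈ Icc (l + 1) k, γ f := by
    apply Finset.sum_nonneg
    intro f hf
    obtain ⟨hf1, hf2⟩ := Finset.mem_Icc.mp hf
    exact hγ f (Finset.mem_Icc.mpr ⟨le_trans hl1 (le_trans (Nat.le_succ l) hf1), hf2⟩)
  set T : ℝ := ∑ f ∈ Icc (l + 1) k, γ f with hTdef
  have hsplit : ∑ f ∈ Icc l k, γ f = γ l + T := by
    rw [hTdef, Finset.Icc_eq_cons_Ioc hlk, Finset.sum_cons, ← Finset.Icc_add_one_left_eq_Ioc]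
  have hBl : B l = Real.logb 2 (1 + γ l + T) := by
    simp only [hB, hsplit]; ring_nf
  have hBl1 : B (l + 1) = Real.logb 2 (1 + T) := by simp [hB, hTdef]
  rw [hBl, hBl1]
  apply mul_le_mul_of_nonneg_left _ (hρnn l hlk)
  have h1 : (0:ℝ) < 1 + γ l + T := by linarith
  have h2 : (0:ℝ) < 1 + T := by linarith
  have h3 : (0:ℝ) < 1 + γ l := by linarith
  have key : (1:ℝ) + γ l + T ≤ (1 + γ l) * (1 + T) := by nlinarith
  have hmono : Real.logb 2 (1 + γ l + T) ≤ Real.logb 2 ((1 + γ l) * (1 + T)) :=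
    Real.logb_le_logb_of_le (by norm_num) h1 key
  have hmul : Real.logb 2 ((1 + γ l) * (1 + T))
      = Real.logb 2 (1 + γ l) + Real.logb 2 (1 + T) :=
    Real.logb_mul (ne_of_gt h3) (ne_of_gt h2)
  linarith
end

section
/- Let (Ω, ℱ, P) be a probability space, let γ₁, …, γ_k be independent nonnegative real-valued random variables, and let 0 = ρ₀ ≤ ρ₁ ≤ ρ₂ ≤ … ≤ ρ_k be reals with ρ₁ > 0. Then P(Σ_{l=1}^{k} ρ_l·log₂(1 + γ_l) < 1) ≤ P(Σ_{l=1}^{k} (ρ_l − ρ_{l−1})·log₂(1 + Σ_{f=l}^{k} γ_f) < 1) ≤ ∏_{l=1}^{k} P(ρ_l·log₂(1 + γ_l) < 1). -/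
open Finset MeasureTheory ProbabilityTheory

private lemma icc_to_range (f : ℕ → ℝ) (k : ℕ) :
    ∑ i ∈ Icc 1 k, f i = ∑ i ∈ range k, f (1 + i) := by
  rw [← Finset.Ico_add_one_right_eq_Icc, Finset.sum_Ico_eq_sum_range]
  simp

private lemma logb_key {x s : ℝ} (hx : 0 ≤ x) (hs : 0 ≤ s) :
    Real.logb 2 (1 + (x + s)) - Real.logb 2 (1 + s) ≤ Real.logb 2 (1 + x) := by
  have h1 : (0:ℝ) < 1 + (x + s) := by linarith
  have hle : 1 + (x + s) ≤ (1 + x) * (1 + s) := by nlinarith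
  have := Real.logb_le_logb_of_le (b := 2) (by norm_num) h1 hle
  rw [Real.logb_mul (by positivity) (by positivity)] at this
  linarith

private lemma rho_pos {k : ℕ} (ρ : ℕ → ℝ) (hρ1 : 0 < ρ 1)
    (hρmono : ∀ l, 1 ≤ l → l ≤ k → ρ (l - 1) ≤ ρ l) :
    ∀ l, 1 ≤ l → l ≤ k → 0 < ρ l := by
  intro l hl
  induction l, hl using Nat.le_induction with
  | base => intro _; exact hρ1
  | succ n hn ih =>
    intro hnk
    have h1 := hρmono (n + 1) (by omega) hnk
    simp only [Nat.add_sub_cancel] at h1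
    exact lt_of_lt_of_le (ih (by omega)) h1

/-- Pointwise: Chase-combining accumulated information is at most IR information. -/
private lemma ch_le_ir {k : ℕ} (a : ℕ → ℝ) (ha : ∀ l, 0 ≤ a l)
    (ρ : ℕ → ℝ) (hρ0 : ρ 0 = 0) (hρ1 : 0 < ρ 1)
    (hρmono : ∀ l, 1 ≤ l → l ≤ k → ρ (l - 1) ≤ ρ l) :
    ∑ l ∈ Icc 1 k, (ρ l - ρ (l - 1)) * Real.logb 2 (1 + ∑ f ∈ Icc l k, a f) ≤
      ∑ l ∈ Icc 1 k, ρ l * Real.logb 2 (1 + a l) := by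
  set L : ℕ → ℝ := fun l => Real.logb 2 (1 + ∑ f ∈ Icc l k, a f) with hL
  have hLtop : L (k + 1) = 0 := by
    simp [hL, Finset.Icc_eq_empty (by omega : ¬ k + 1 ≤ k)]
  have hstep : ∀ i, i < k → L (1 + i) - L (1 + i + 1) ≤ Real.logb 2 (1 + a (1 + i)) := by
    intro i hi
    have hins : Icc (1 + i) k = insert (1 + i) (Icc (1 + i + 1) k) := by
      rw [Finset.Icc_add_one_left_eq_Ioc, Finset.Ioc_insert_left (by omega : 1 + i ≤ k)]
    have hsplit : ∑ f ∈ Icc (1 + i) k, a f = a (1 + i) + ∑ f ∈ Icc (1 + i + 1) k, a f := by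
      rw [hins, Finset.sum_insert (by simp)]
    have hs : 0 ≤ ∑ f ∈ Icc (1 + i + 1) k, a f := Finset.sum_nonneg fun f _ => ha f
    simpa [hL, hsplit] using logb_key (ha (1 + i)) hs
  rw [icc_to_range, icc_to_range]
  simp only [Nat.add_sub_cancel, show ∀ i : ℕ, 1 + i - 1 = i from fun i => by omega]
  have habel : ∑ i ∈ range k, (ρ (1 + i) - ρ i) * L (1 + i)
      = ∑ i ∈ range k, ρ (1 + i) * (L (1 + i) - L (1 + i + 1)) := by
    have t := Finset.sum_range_sub (fun i => ρ i * L (i + 1)) k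
    have h2 : ∑ i ∈ range k, ((ρ (1 + i) - ρ i) * L (1 + i)
        - ρ (1 + i) * (L (1 + i) - L (1 + i + 1)))
        = ρ k * L (k + 1) - ρ 0 * L (0 + 1) := by
      rw [← t]
      refine Finset.sum_congr rfl fun i _ => ?_
      ring_nf
    rw [Finset.sum_sub_distrib] at h2
    rw [hLtop, hρ0] at h2
    linarith
  rw [habel]
  refine Finset.sum_le_sum fun i hi => ?_
  rw [Finset.mem_range] at hi
  have hρpos := rho_pos ρ hρ1 hρmono (1 + i) (by omega) (by omega)
  exact mul_le_mul_of_nonneg_left (hstep i hi) hρpos.le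

/-- If the Chase-combining sum is below 1, each individual attempt fails. -/
private lemma ch_imp_single {k : ℕ} (a : ℕ → ℝ) (ha : ∀ l, 0 ≤ a l)
    (ρ : ℕ → ℝ) (hρ0 : ρ 0 = 0)
    (hρmono : ∀ l, 1 ≤ l → l ≤ k → ρ (l - 1) ≤ ρ l)
    (hCH : ∑ l ∈ Icc 1 k, (ρ l - ρ (l - 1)) * Real.logb 2 (1 + ∑ f ∈ Icc l k, a f) < 1)
    {l : ℕ} (hl1 : 1 ≤ l) (hlk : l ≤ k) :
    ρ l * Real.logb 2 (1 + a l) < 1 := by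
  set L : ℕ → ℝ := fun j => Real.logb 2 (1 + ∑ f ∈ Icc j k, a f) with hLdef
  have hLnn : ∀ j, 0 ≤ L j := fun j =>
    Real.logb_nonneg (by norm_num) (by
      have : 0 ≤ ∑ f ∈ Icc j k, a f := Finset.sum_nonneg fun f _ => ha f
      linarith)
  have hterm_nn : ∀ j ∈ Icc 1 k, 0 ≤ (ρ j - ρ (j - 1)) * L j := by
    intro j hj
    rw [Finset.mem_Icc] at hj
    exact mul_nonneg (by linarith [hρmono j hj.1 hj.2]) (hLnn j)
  have hla_nn : 0 ≤ Real.logb 2 (1 + a l) :=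
    Real.logb_nonneg (by norm_num) (by linarith [ha l])
  have hLge : ∀ j ∈ Icc 1 l, Real.logb 2 (1 + a l) ≤ L j := by
    intro j hj
    rw [Finset.mem_Icc] at hj
    have hmem : l ∈ Icc j k := Finset.mem_Icc.mpr ⟨hj.2, hlk⟩
    have hsum : a l ≤ ∑ f ∈ Icc j k, a f :=
      Finset.single_le_sum (fun f _ => ha f) hmem
    exact Real.logb_le_logb_of_le (by norm_num) (by linarith [ha l]) (by linarith)
  have htel : ∑ j ∈ Icc 1 l, (ρ j - ρ (j - 1)) = ρ l := by
    rw [icc_to_range]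
    simp only [show ∀ i : ℕ, 1 + i - 1 = i from fun i => by omega]
    calc ∑ i ∈ range l, (ρ (1 + i) - ρ i)
        = ∑ i ∈ range l, (ρ (i + 1) - ρ i) :=
          Finset.sum_congr rfl fun i _ => by rw [Nat.add_comm]
      _ = ρ l - ρ 0 := Finset.sum_range_sub ρ l
      _ = ρ l := by rw [hρ0, sub_zero]
  have h1 : ρ l * Real.logb 2 (1 + a l)
      = ∑ j ∈ Icc 1 l, (ρ j - ρ (j - 1)) * Real.logb 2 (1 + a l) := by
    rw [← Finset.sum_mul, htel]
  have h2 : ∑ j ∈ Icc 1 l, (ρ j - ρ (j - 1)) * Real.logb 2 (1 + a l)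
      ≤ ∑ j ∈ Icc 1 l, (ρ j - ρ (j - 1)) * L j := by
    refine Finset.sum_le_sum fun j hj => ?_
    rw [Finset.mem_Icc] at hj
    exact mul_le_mul_of_nonneg_left (hLge j (Finset.mem_Icc.mpr hj))
      (by linarith [hρmono j hj.1 (hj.2.trans hlk)])
  have h3 : ∑ j ∈ Icc 1 l, (ρ j - ρ (j - 1)) * L j
      ≤ ∑ j ∈ Icc 1 k, (ρ j - ρ (j - 1)) * L j := by
    refine Finset.sum_le_sum_of_subset_of_nonneg ?_ fun j hj _ => hterm_nn j hj
    exact Finset.Icc_subset_Icc_right hlk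
  calc ρ l * Real.logb 2 (1 + a l)
      = ∑ j ∈ Icc 1 l, (ρ j - ρ (j - 1)) * Real.logb 2 (1 + a l) := h1
    _ ≤ ∑ j ∈ Icc 1 l, (ρ j - ρ (j - 1)) * L j := h2
    _ ≤ ∑ j ∈ Icc 1 k, (ρ j - ρ (j - 1)) * L j := h3
    _ < 1 := hCH

/-- The ordering `f_IR,k ≤ f_CH,k ≤ f_I,k` of the decoding-failure probabilities of
incremental-redundancy, Chase-combining, and type-I HARQ over an independently
block-fading channel, for nondecreasing redundancies. -/
theorem harq_failure_ordering {Ω : Type*} [MeasurableSpace Ω]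
    (P : Measure Ω) [IsProbabilityMeasure P]
    (k : ℕ) (hk : 1 ≤ k) (γ : ℕ → Ω → ℝ)
    (hmeas : ∀ l, Measurable (γ l))
    (hindep : iIndepFun γ P)
    (hnonneg : ∀ l, ∀ ω, 0 ≤ γ l ω)
    (ρ : ℕ → ℝ) (hρ0 : ρ 0 = 0) (hρ1 : 0 < ρ 1)
    (hρmono : ∀ l, 1 ≤ l → l ≤ k → ρ (l - 1) ≤ ρ l) :
    P {ω | ∑ l ∈ Finset.Icc 1 k, ρ l * Real.logb 2 (1 + γ l ω) < 1} ≤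
        P {ω | ∑ l ∈ Finset.Icc 1 k, (ρ l - ρ (l - 1)) *
            Real.logb 2 (1 + ∑ f ∈ Finset.Icc l k, γ f ω) < 1} ∧
      P {ω | ∑ l ∈ Finset.Icc 1 k, (ρ l - ρ (l - 1)) *
            Real.logb 2 (1 + ∑ f ∈ Finset.Icc l k, γ f ω) < 1} ≤
        ∏ l ∈ Finset.Icc 1 k, P {ω | ρ l * Real.logb 2 (1 + γ l ω) < 1} := by
  constructor
  · apply measure_mono
    intro ω hω
    simp only [Set.mem_setOf_eq] at *
    calc ∑ l ∈ Finset.Icc 1 k, (ρ l - ρ (l - 1)) *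
          Real.logb 2 (1 + ∑ f ∈ Finset.Icc l k, γ f ω)
        ≤ ∑ l ∈ Finset.Icc 1 k, ρ l * Real.logb 2 (1 + γ l ω) :=
          ch_le_ir (fun l => γ l ω) (fun l => hnonneg l ω) ρ hρ0 hρ1 hρmono
      _ < 1 := hω
  · set B : ℕ → Set ℝ := fun l => {x | ρ l * Real.logb 2 (1 + x) < 1} with hB
    have hBmeas : ∀ l, MeasurableSet (B l) := by
      intro l
      have : Measurable fun x : ℝ => ρ l * Real.logb 2 (1 + x) := by
        simp only [Real.logb]
        exact (((Real.measurable_log.comp (measurable_const.add measurable_id)).div_const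
          _).const_mul _)
      exact measurableSet_lt this measurable_const
    have hsub : {ω | ∑ l ∈ Finset.Icc 1 k, (ρ l - ρ (l - 1)) *
        Real.logb 2 (1 + ∑ f ∈ Finset.Icc l k, γ f ω) < 1} ⊆
        ⋂ l ∈ Finset.Icc 1 k, γ l ⁻¹' B l := by
      intro ω hω
      simp only [Set.mem_setOf_eq] at hω
      simp only [Set.mem_iInter, Set.mem_preimage, hB, Set.mem_setOf_eq]
      intro l hl
      rw [Finset.mem_Icc] at hl
      exact ch_imp_single (fun l => γ l ω) (fun l => hnonneg l ω) ρ hρ0 hρmono hω hl.1 hl.2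
    calc P {ω | ∑ l ∈ Finset.Icc 1 k, (ρ l - ρ (l - 1)) *
          Real.logb 2 (1 + ∑ f ∈ Finset.Icc l k, γ f ω) < 1}
        ≤ P (⋂ l ∈ Finset.Icc 1 k, γ l ⁻¹' B l) := measure_mono hsub
      _ = ∏ l ∈ Finset.Icc 1 k, P (γ l ⁻¹' B l) :=
          hindep.meas_biInter fun l _ => ⟨B l, hBmeas l, rfl⟩
      _ = ∏ l ∈ Finset.Icc 1 k, P {ω | ρ l * Real.logb 2 (1 + γ l ω) < 1} := rfl
end
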